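/- arXiv:2303.00506 — 5 statements merged into one kernel-verified Lean document; each statement's English description precedes it below -/
import Mathlib

section
/- For any vector y ∈ ℝ^n, there exists a unique real number t such that ∑_{i=1}^n max(y_i - t, 0) = 1, and the vector x with x_i = max(y_i - t, 0) is the Euclidean projection of y onto the probability simplex Δ^n = {x ∈ ℝ^n_+ : ∑_i x_i = 1}. -/
open Finset
open scoped InnerProductSpace

/-- For any `y ∈ ℝⁿ` there is a unique `t` with `∑ᵢ max (yᵢ - t) 0 = 1`, and the vector
`x` with `xᵢ = max (yᵢ - t) 0` is the Euclidean projection of `y` onto the simplex. -/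
theorem stmt0 (n : ℕ) (hn : 0 < n) (y : EuclideanSpace ℝ (Fin n)) :
    (∃! t : ℝ, ∑ i, max (y i - t) 0 = 1) ∧
    (∀ t : ℝ, (∑ i, max (y i - t) 0 = 1) →
      ∀ x : EuclideanSpace ℝ (Fin n), (∀ i, x i = max (y i - t) 0) →
        ((∀ i, 0 ≤ x i) ∧ ∑ i, x i = 1) ∧
        ∀ z : EuclideanSpace ℝ (Fin n), (∀ i, 0 ≤ z i) → (∑ i, z i = 1) →
          ‖x - y‖ ≤ ‖z - y‖ ∧ (‖z - y‖ = ‖x - y‖ → z = x)) := by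
  have hne : Nonempty (Fin n) := ⟨⟨0, hn⟩⟩
  have hune : (Finset.univ : Finset (Fin n)).Nonempty := univ_nonempty
  set f : ℝ → ℝ := fun t => ∑ i, max (y i - t) 0 with hf
  -- strict decrease where positive
  have hstrict : ∀ s t : ℝ, s < t → f s = 1 → f t < 1 := by
    intro s t hst hfs
    have hpos : ∃ i : Fin n, 0 < max (y i - s) 0 := by
      by_contra h
      push_neg at h
      have : f s = 0 := by
        apply Finset.sum_eq_zero
        intro i _
        exact le_antisymm (h i) (le_max_right _ _)
      rw [hfs] at this; norm_num at this
    obtain ⟨i, hi⟩ := hpos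
    have hyi : s < y i := by
      by_contra h
      push_neg at h
      rw [max_eq_right (by linarith)] at hi
      exact lt_irrefl _ hi
    calc f t < f s := by
          apply Finset.sum_lt_sum
          · intro j _
            exact max_le_max (by linarith) le_rfl
          · refine ⟨i, mem_univ i, ?_⟩
            rw [max_eq_left (by linarith : (0:ℝ) ≤ y i - s)]
            rcases le_or_gt (y i - t) 0 with h | h
            · rw [max_eq_right h]; linarith
            · rw [max_eq_left h.le]; linarith
      _ = 1 := hfs
  constructor
  · -- existence and uniqueness of t
    have hcont : Continuous f := by
      apply continuous_finset_sum
      intro i _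
      exact (continuous_const.sub continuous_id).max continuous_const
    set a : ℝ := (Finset.univ.inf' hune y) - 1 with ha
    set b : ℝ := Finset.univ.sup' hune y with hb
    have hab : a ≤ b := by
      have h1 := Finset.inf'_le y (mem_univ (⟨0, hn⟩ : Fin n))
      have h2 := Finset.le_sup' y (mem_univ (⟨0, hn⟩ : Fin n))
      simp only [ha, hb]; linarith
    have hfb : f b = 0 := by
      apply Finset.sum_eq_zero
      intro i _
      have : y i ≤ b := Finset.le_sup' y (mem_univ i)
      rw [max_eq_right (by linarith)]
    have hfa : 1 ≤ f a := by
      have h1 : ∀ i ∈ Finset.univ, (1:ℝ) ≤ max (y i - a) 0 := by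
        intro i _
        have : a ≤ y i - 1 := by
          have := Finset.inf'_le y (mem_univ i); simp only [ha]; linarith
        exact le_max_of_le_left (by linarith)
      calc (1:ℝ) ≤ (n:ℝ) := by exact_mod_cast hn
        _ = ∑ _i : Fin n, (1:ℝ) := by simp
        _ ≤ f a := Finset.sum_le_sum h1
    have := intermediate_value_Icc' hab hcont.continuousOn
      (Set.mem_Icc.mpr ⟨by rw [hfb]; norm_num, hfa⟩)
    obtain ⟨t, _, ht⟩ := this
    refine ⟨t, ht, ?_⟩
    intro s hs
    rcases lt_trichotomy s t with h | h | h
    · exact absurd ht (ne_of_lt (hstrict s t h hs))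
    · exact h
    · exact absurd hs (ne_of_lt (hstrict t s h ht))
  · intro t ht x hx
    have hxnn : ∀ i, 0 ≤ x i := fun i => (hx i) ▸ le_max_right _ _
    have hxsum : ∑ i, x i = 1 := by rw [Finset.sum_congr rfl fun i _ => hx i]; exact ht
    refine ⟨⟨hxnn, hxsum⟩, ?_⟩
    intro z hz hzsum
    have hge : ∀ i, -t ≤ x i - y i := by
      intro i
      rw [hx i]
      rcases le_or_gt (y i) t with h | h
      · rw [max_eq_right (by linarith)]; linarith
      · rw [max_eq_left (by linarith)]; linarith
    have hxe : ∀ i, x i * (x i - y i) = x i * (-t) := by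
      intro i
      rcases le_or_gt (y i) t with h | h
      · have : x i = 0 := by rw [hx i, max_eq_right (by linarith)]
        rw [this]; ring
      · have hxi : x i = y i - t := by rw [hx i, max_eq_left (by linarith)]
        rw [hxi]; ring
    have key : 0 ≤ ⟪z - x, x - y⟫_ℝ := by
      have hinner : ⟪z - x, x - y⟫_ℝ = ∑ i, (z i - x i) * (x i - y i) := by
        rw [PiLp.inner_apply]
        apply Finset.sum_congr rfl
        intro i _
        simp [RCLike.inner_apply]; ring
      rw [hinner]
      have hsum : ∑ i, (z i * (-t) - x i * (-t)) ≤ ∑ i, (z i - x i) * (x i - y i) := by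
        apply Finset.sum_le_sum
        intro i _
        have h1 : z i * (-t) ≤ z i * (x i - y i) :=
          mul_le_mul_of_nonneg_left (hge i) (hz i)
        have h2 : x i * (x i - y i) = x i * (-t) := hxe i
        nlinarith [h1, h2]
      have hzero : ∑ i, (z i * (-t) - x i * (-t)) = 0 := by
        rw [Finset.sum_sub_distrib, ← Finset.sum_mul, ← Finset.sum_mul, hzsum, hxsum]; ring
      linarith
    have hdecomp : ‖z - y‖ ^ 2 = ‖z - x‖ ^ 2 + 2 * ⟪z - x, x - y⟫_ℝ + ‖x - y‖ ^ 2 := by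
      have h : z - y = (z - x) + (x - y) := by abel
      rw [h, norm_add_sq_real]
    have hsq : ‖x - y‖ ^ 2 ≤ ‖z - y‖ ^ 2 := by
      nlinarith [sq_nonneg ‖z - x‖, key]
    have hle : ‖x - y‖ ≤ ‖z - y‖ :=
      (pow_le_pow_iff_left₀ (norm_nonneg _) (norm_nonneg _) two_ne_zero).mp hsq
    refine ⟨hle, ?_⟩
    intro heq
    have h0 : ‖z - x‖ ^ 2 = 0 := by
      have : ‖z - y‖ ^ 2 = ‖x - y‖ ^ 2 := by rw [heq]
      nlinarith [sq_nonneg ‖z - x‖, key]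
    have : z - x = 0 := by
      have := pow_eq_zero_iff (n := 2) two_ne_zero |>.mp h0
      exact norm_eq_zero.mp this
    exact sub_eq_zero.mp this
end

section
/- Let b_i, b_i^+ ∈ ℝ^m with b_{ij}, b_{ij}^+ > 0 and ∑_j b_{ij}^+ = ∑_j b_{ij}. Let c_j ≥ 0 and set p_j = c_j + b_{ij}, p_j^+ = c_j + b_{ij}^+. Then ∑_j p_j^+ log(p_j^+/p_j) ≤ ∑_j b_{ij}^+ log(b_{ij}^+/b_{ij}). -/
open Finset

lemma stmt8_key (B B' C : ℝ) (hB : 0 < B) (hB' : 0 < B') (hC : 0 ≤ C) :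
    (C + B') * Real.log ((C + B') / (C + B)) ≤ B' * Real.log (B' / B) := by
  have hCB : 0 < C + B := by linarith
  have hCB' : 0 < C + B' := by linarith
  have h1 : Real.log ((C + B') / (C + B)) ≤ (C + B') / (C + B) - 1 :=
    Real.log_le_sub_one_of_pos (by positivity)
  have h2 : Real.log ((C + B') * B / ((C + B) * B')) ≤ (C + B') * B / ((C + B) * B') - 1 :=
    Real.log_le_sub_one_of_pos (by positivity)
  rw [Real.log_div hCB'.ne' hCB.ne'] at h1 ⊢
  rw [Real.log_div hB'.ne' hB.ne']
  rw [Real.log_div (by positivity) (by positivity), Real.log_mul hCB'.ne' hB.ne',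
    Real.log_mul hCB.ne' hB'.ne'] at h2
  have e1 : (C + B') / (C + B) - 1 = (B' - B) / (C + B) := by field_simp; ring
  have e2 : (C + B') * B / ((C + B) * B') - 1 = C * (B - B') / ((C + B) * B') := by
    field_simp; ring
  rw [e1] at h1
  rw [e2] at h2
  have h1' : C * (Real.log (C + B') - Real.log (C + B)) ≤ C * (B' - B) / (C + B) := by
    rw [mul_div_assoc]
    exact mul_le_mul_of_nonneg_left h1 hC
  have h2' : B' * (Real.log (C + B') + Real.log B - (Real.log (C + B) + Real.log B'))
      ≤ C * (B - B') / (C + B) := by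
    have := mul_le_mul_of_nonneg_left h2 hB'.le
    calc B' * (Real.log (C + B') + Real.log B - (Real.log (C + B) + Real.log B'))
        ≤ B' * (C * (B - B') / ((C + B) * B')) := this
      _ = C * (B - B') / (C + B) := by field_simp
  have hCBpos := hCB
  have : C * (B' - B) / (C + B) + C * (B - B') / (C + B) = 0 := by field_simp; ring
  nlinarith [h1', h2']

/-- When one buyer's bids change (so prices change by the same amounts), the
KL-type divergence of prices is bounded by the KL divergence of the bids. -/
theorem stmt8 (m : ℕ) (b bp c : Fin m → ℝ)
    (hb : ∀ j, 0 < b j) (hbp : ∀ j, 0 < bp j) (hc : ∀ j, 0 ≤ c j)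
    (hsum : ∑ j, bp j = ∑ j, b j) :
    ∑ j, (c j + bp j) * Real.log ((c j + bp j) / (c j + b j))
      ≤ ∑ j, bp j * Real.log (bp j / b j) := by
  apply Finset.sum_le_sum
  intro j _
  exact stmt8_key (b j) (bp j) (c j) (hb j) (hbp j) (hc j)
end

section
/- Consider the optimization problem min_{a ∈ ℝ^m} ⟨g, a - b⟩ + (1/α)·D_KL(a, b) subject to ∑_j a_j = B and a ≥ 0, where b ∈ ℝ^m with b_j > 0, g_j = 1 - log(v_j/p_j) with v_j, p_j > 0, α > 0, B > 0, and D_KL(a,b) = ∑_j a_j log(a_j/b_j) (with the convention using the kernel ∑_j (a_j log a_j - a_j)). Then the unique optimal solution is a_j = (1/Z)·b_j·(v_j/p_j)^α where Z = (1/B)·∑_j b_j (v_j/p_j)^α. -/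
open Finset

lemma mul_log_div' (x y : ℝ) (hy : y ≠ 0) :
    x * Real.log (x / y) = x * Real.log x - x * Real.log y := by
  rcases eq_or_ne x 0 with h | h
  · simp [h]
  · rw [Real.log_div h hy]; ring

lemma ent_nonneg {t s : ℝ} (ht : 0 ≤ t) (hs : 0 < s) :
    0 ≤ t * Real.log t - t * Real.log s - t + s ∧
      (t * Real.log t - t * Real.log s - t + s = 0 → t = s) := by
  rcases ht.eq_or_lt with h | h
  · constructor
    · simp [← h]; linarith
    · intro he; rw [← h] at he; simp at he; linarith
  · have hst : 0 < s / t := div_pos hs h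
    have h1 : Real.log (s / t) ≤ s / t - 1 := Real.log_le_sub_one_of_pos hst
    rw [Real.log_div hs.ne' h.ne'] at h1
    have h2 : t * (Real.log s - Real.log t) ≤ t * (s / t - 1) :=
      mul_le_mul_of_nonneg_left h1 h.le
    have h3 : t * (s / t - 1) = s - t := by field_simp
    constructor
    · nlinarith
    · intro he
      by_contra hne
      have hst1 : s / t ≠ 1 := by
        intro hc; apply hne; field_simp at hc; linarith
      have h4 : Real.log (s / t) < s / t - 1 := Real.log_lt_sub_one_of_pos hst hst1
      rw [Real.log_div hs.ne' h.ne'] at h4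
      have h5 : t * (Real.log s - Real.log t) < t * (s / t - 1) :=
        (mul_lt_mul_iff_right₀ h).mpr h4
      nlinarith

/-- Closed-form multiplicative update of (block coordinate) proportional response:
the unique optimizer of `min ⟨g, a - b⟩ + (1/α) D_KL(a,b)` over the scaled simplex
is `aⱼ = (1/Z) bⱼ (vⱼ/pⱼ)^α` with `Z = (1/B) ∑ⱼ bⱼ (vⱼ/pⱼ)^α`. -/
theorem stmt11 (m : ℕ) (hm : 0 < m) (b v p : Fin m → ℝ) (α B : ℝ)
    (hb : ∀ j, 0 < b j) (hv : ∀ j, 0 < v j) (hp : ∀ j, 0 < p j)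
    (hα : 0 < α) (hB : 0 < B)
    (g : Fin m → ℝ) (hgdef : ∀ j, g j = 1 - Real.log (v j / p j))
    (obj : (Fin m → ℝ) → ℝ)
    (hobj : obj = fun a => ∑ j, g j * (a j - b j)
      + (1 / α) * ∑ j, a j * Real.log (a j / b j))
    (Z : ℝ) (hZ : Z = (1 / B) * ∑ j, b j * (v j / p j) ^ α)
    (astar : Fin m → ℝ) (hastar : ∀ j, astar j = (1 / Z) * b j * (v j / p j) ^ α) :
    ((∀ j, 0 ≤ astar j) ∧ ∑ j, astar j = B) ∧
    ∀ a : Fin m → ℝ, (∀ j, 0 ≤ a j) → (∑ j, a j = B) →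
      obj astar ≤ obj a ∧ (obj a = obj astar → a = astar) := by
  have : Nonempty (Fin m) := ⟨⟨0, hm⟩⟩
  have hα' : α ≠ 0 := hα.ne'
  have hS : 0 < ∑ j, b j * (v j / p j) ^ α :=
    Finset.sum_pos (fun j _ => by have := hb j; have := hv j; have := hp j; positivity)
      Finset.univ_nonempty
  have hZ0 : 0 < Z := by rw [hZ]; positivity
  have hspos : ∀ j, 0 < astar j := fun j => by
    rw [hastar j]; have := hb j; have := hv j; have := hp j; positivity
  have hsum : ∑ j, astar j = B := by
    have : ∑ j, astar j = (1 / Z) * ∑ j, b j * (v j / p j) ^ α := by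
      rw [Finset.mul_sum]; exact Finset.sum_congr rfl fun j _ => by rw [hastar j]; ring
    rw [this, hZ]; field_simp
  set lam : ℝ := 1 + (1 - Real.log Z) / α with hlam
  have hlog_astar : ∀ j, Real.log (astar j) =
      Real.log (b j) + α * Real.log (v j / p j) - Real.log Z := by
    intro j
    rw [hastar j, one_div, mul_assoc,
      Real.log_mul (inv_ne_zero hZ0.ne') (by have := hb j; have := hv j; have := hp j; positivity),
      Real.log_inv,
      Real.log_mul (hb j).ne' (by have := hv j; have := hp j; positivity),
      Real.log_rpow (div_pos (hv j) (hp j))]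
    ring
  have hpt : ∀ j (t : ℝ),
      g j * (t - b j) + (1 / α) * (t * Real.log (t / b j)) =
        (g j * (astar j - b j) + (1 / α) * (astar j * Real.log (astar j / b j)))
          + lam * (t - astar j)
          + (1 / α) * (t * Real.log t - t * Real.log (astar j) - t + astar j) := by
    intro j t
    rw [mul_log_div' t (b j) (hb j).ne', mul_log_div' (astar j) (b j) (hb j).ne',
      hgdef j, hlam]
    have hla := hlog_astar j
    field_simp
    linear_combination (t - astar j) * hla
  have h1 : ∀ a : Fin m → ℝ, obj a =
      ∑ j, (g j * (a j - b j) + (1 / α) * (a j * Real.log (a j / b j))) := by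
    intro a
    rw [hobj]
    simp only [Finset.sum_add_distrib, Finset.mul_sum]
  have hkey : ∀ a : Fin m → ℝ, obj a = obj astar + lam * ((∑ j, a j) - B)
      + (1 / α) * ∑ j, (a j * Real.log (a j) - a j * Real.log (astar j) - a j + astar j) := by
    intro a
    rw [h1 a, h1 astar]
    rw [Finset.sum_congr rfl (fun j _ => hpt j (a j))]
    rw [Finset.sum_add_distrib, Finset.sum_add_distrib, ← Finset.mul_sum, ← Finset.mul_sum,
      Finset.sum_sub_distrib, hsum]
  refine ⟨⟨fun j => (hspos j).le, hsum⟩, fun a ha hsa => ?_⟩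
  have hE : ∀ j ∈ Finset.univ,
      0 ≤ a j * Real.log (a j) - a j * Real.log (astar j) - a j + astar j :=
    fun j _ => (ent_nonneg (ha j) (hspos j)).1
  have hEsum : 0 ≤ ∑ j, (a j * Real.log (a j) - a j * Real.log (astar j) - a j + astar j) :=
    Finset.sum_nonneg hE
  have hdiff := hkey a
  rw [hsa, sub_self, mul_zero, add_zero] at hdiff
  constructor
  · rw [hdiff]
    nlinarith [mul_nonneg (le_of_lt (by positivity : (0:ℝ) < 1 / α)) hEsum]
  · intro heq
    rw [hdiff] at heq
    have hsum0 : ∑ j, (a j * Real.log (a j) - a j * Real.log (astar j) - a j + astar j) = 0 := by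
      have h1α : (0:ℝ) < 1 / α := by positivity
      have hm0 : (1 / α) * ∑ j, (a j * Real.log (a j) - a j * Real.log (astar j)
          - a j + astar j) = 0 := by linarith
      rcases mul_eq_zero.mp hm0 with h | h
      · exact absurd h h1α.ne'
      · exact h
    have hzero := (Finset.sum_eq_zero_iff_of_nonneg hE).mp hsum0
    funext j
    exact (ent_nonneg (ha j) (hspos j)).2 (hzero j (Finset.mem_univ j))
end

section
/- Let b, b⁺, c ≥ 0 with b, b⁺ > 0, and suppose b⁺/b ∈ [1/β, β] for some β ∈ (1, √2]. If b⁺ ≥ b, then (b⁺ - b)²(c + b)² ≤ 2(c + λb⁺ + (1-λ)b)³(b⁺ - b/(2β)) for every λ ∈ [0,1]; the same inequality also holds if b⁺ < b. -/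
set_option maxHeartbeats 1600000 in
/-- Key algebraic inequality in the adaptive-stepsize BCPR analysis:
for `b, b⁺ > 0`, `c ≥ 0`, `b⁺/b ∈ [1/β, β]` with `β ∈ (1, √2]`,
`(b⁺ - b)² (c + b)² ≤ 2 (c + λb⁺ + (1-λ)b)³ (b⁺ - b/(2β))` for every `λ ∈ [0,1]`. -/
theorem stmt16 (b bp c β : ℝ) (hb : 0 < b) (hbp : 0 < bp) (hc : 0 ≤ c)
    (hβ1 : 1 < β) (hβ2 : β ≤ Real.sqrt 2)
    (hlo : 1 / β ≤ bp / b) (hhi : bp / b ≤ β) :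
    ∀ lam ∈ Set.Icc (0 : ℝ) 1,
      (bp - b) ^ 2 * (c + b) ^ 2
        ≤ 2 * (c + lam * bp + (1 - lam) * b) ^ 3 * (bp - b / (2 * β)) := by
  intro lam hlam
  obtain ⟨hl0, hl1⟩ := hlam
  have hβ0 : (0:ℝ) < β := lt_trans one_pos hβ1
  have hβsq : β ^ 2 ≤ 2 := by
    nlinarith [Real.sq_sqrt (by norm_num : (0:ℝ) ≤ 2), Real.sqrt_nonneg 2]
  have hble : b ≤ β * bp := by
    rw [div_le_div_iff₀ hβ0 hb] at hlo; nlinarith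
  have hbple : bp ≤ β * b := by
    rw [div_le_iff₀ hb] at hhi; linarith
  set m := c + lam * bp + (1 - lam) * b with hm
  set q := b / (2 * β) with hqdef
  have hq : q * (2 * β) = b := by
    rw [hqdef]; exact div_mul_cancel₀ _ (by positivity)
  have hq0 : 0 < q := by rw [hqdef]; positivity
  clear_value m q
  clear hqdef hlo hhi hβ2
  have hqb : q ≤ b := by nlinarith
  rcases le_or_gt b bp with hge | hlt
  · -- case b⁺ ≥ b
    have ha : 0 ≤ bp - b := by linarith
    have hA : bp - b ≤ bp - q := by linarith
    have hβ2' : β ≤ 2 := by nlinarith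
    have hm0 : c + b ≤ m := by nlinarith [mul_nonneg hl0 (sub_nonneg.mpr hge)]
    have h2m : bp - b ≤ 2 * m := by nlinarith [mul_nonneg hl0 (sub_nonneg.mpr hge)]
    have hcb : (0:ℝ) ≤ c + b := by linarith
    have hm2 : (c + b) ^ 2 ≤ m ^ 2 := by nlinarith
    have h1 : (bp - b) * (bp - b) ≤ (bp - q) * (2 * m) :=
      mul_le_mul hA h2m ha (by linarith)
    have h2 : (bp - b) * (bp - b) * ((c + b) ^ 2)
        ≤ (bp - q) * (2 * m) * (m ^ 2) :=
      mul_le_mul h1 hm2 (by positivity) (by nlinarith)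
    calc (bp - b) ^ 2 * (c + b) ^ 2
        = (bp - b) * (bp - b) * ((c + b) ^ 2) := by ring
      _ ≤ (bp - q) * (2 * m) * (m ^ 2) := h2
      _ = 2 * m ^ 3 * (bp - q) := by ring
  · -- case b⁺ < b
    have ha : 0 ≤ b - bp := by linarith
    have h1 : b - bp ≤ bp := by nlinarith
    have hpos : 0 < bp - q := by nlinarith
    have h2 : β ^ 2 * (b - bp) ≤ 2 * (bp - q) := by
      have s1 : b - bp ≤ (β - 1) * bp := by nlinarith
      have hβ3 : β ^ 3 ≤ 2 * β := by nlinarith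
      have s2 : β ^ 3 * (b - bp) ≤ (2 * β) * ((β - 1) * bp) :=
        mul_le_mul hβ3 s1 ha (by positivity)
      have s3 : β ≤ 3 / 2 := by nlinarith [sq_nonneg (β - 1)]
      have s4 : (2 * β) * ((β - 1) * bp) + b ≤ 2 * β * bp := by
        nlinarith [mul_nonneg (mul_pos hβ0 hbp).le (by linarith : (0:ℝ) ≤ 3 - 2 * β)]
      have key : β ^ 3 * (b - bp) + b ≤ 2 * β * bp := by linarith
      have h2' : β * (β ^ 2 * (b - bp)) ≤ β * (2 * (bp - q)) := by nlinarith [key, hq]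
      exact le_of_mul_le_mul_left h2' hβ0
    have h3 : c + b ≤ β * (c + bp) := by nlinarith
    have h4 : c + bp ≤ m := by
      nlinarith [mul_nonneg (sub_nonneg.mpr hl1) (sub_nonneg.mpr hlt.le)]
    have hcbp : (0:ℝ) < c + bp := by linarith
    have hsq : (c + b) ^ 2 ≤ (β * (c + bp)) ^ 2 := by
      apply pow_le_pow_left₀ (by linarith) h3
    have e1 : (b - bp) * (b - bp) * ((c + b) ^ 2)
        ≤ (b - bp) * bp * ((β * (c + bp)) ^ 2) :=
      mul_le_mul (mul_le_mul_of_nonneg_left h1 ha) hsq (by positivity)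
        (mul_nonneg ha hbp.le)
    have e2 : (β ^ 2 * (b - bp)) * (bp * (c + bp) ^ 2)
        ≤ (2 * (bp - q)) * (bp * (c + bp) ^ 2) :=
      mul_le_mul_of_nonneg_right h2 (by positivity)
    have e3 : bp * (c + bp) ^ 2 ≤ m ^ 3 := by
      have hbpm : bp ≤ m := by linarith
      have hm2' : (c + bp) ^ 2 ≤ m ^ 2 := by nlinarith
      calc bp * (c + bp) ^ 2 ≤ m * (c + bp) ^ 2 :=
            mul_le_mul_of_nonneg_right hbpm (by positivity)
        _ ≤ m * m ^ 2 := mul_le_mul_of_nonneg_left hm2' (by linarith)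
        _ = m ^ 3 := by ring
    have e4 : (2 * (bp - q)) * (bp * (c + bp) ^ 2)
        ≤ (2 * (bp - q)) * m ^ 3 :=
      mul_le_mul_of_nonneg_left e3 (by positivity)
    calc (bp - b) ^ 2 * (c + b) ^ 2
        = (b - bp) * (b - bp) * ((c + b) ^ 2) := by ring
      _ ≤ (b - bp) * bp * ((β * (c + bp)) ^ 2) := e1
      _ = (β ^ 2 * (b - bp)) * (bp * (c + bp) ^ 2) := by ring
      _ ≤ (2 * (bp - q)) * (bp * (c + bp) ^ 2) := e2
      _ ≤ (2 * (bp - q)) * m ^ 3 := e4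
      _ = 2 * m ^ 3 * (bp - q) := by ring
end

section
/- Let positive reals {b*_{ij}} and {b_{ij}} (over finite index sets i ∈ [n], j ∈ [m]) satisfy ∑_{i,j} b*_{ij} = ∑_{i,j} b_{ij}. Let η = max_{i,j} |b_{ij} - b*_{ij}|/b*_{ij}. Then D_KL(b*, b) = ∑_{i,j} b*_{ij} log(b*_{ij}/b_{ij}) ≥ (1/8)·min{1, η}·η·min_{i,j} b*_{ij}. -/
open Finset

lemma stmt19_aux1 (x : ℝ) (hx : 0 < x) : (Real.sqrt x - 1)^2 ≤ x - 1 - Real.log x := by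
  have hs : Real.sqrt x ^ 2 = x := Real.sq_sqrt hx.le
  have h1 : Real.log (Real.sqrt x) ≤ Real.sqrt x - 1 :=
    Real.log_le_sub_one_of_pos (Real.sqrt_pos.mpr hx)
  have h2 : Real.log x = 2 * Real.log (Real.sqrt x) := by
    rw [Real.log_sqrt hx.le]; ring
  nlinarith [Real.sqrt_nonneg x]

lemma stmt19_aux2 (x : ℝ) (hx : 0 < x) :
    (1/8) * min 1 |x-1| * |x-1| ≤ (Real.sqrt x - 1)^2 := by
  have hs : Real.sqrt x ^ 2 = x := Real.sq_sqrt hx.le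
  have hs0 : 0 ≤ Real.sqrt x := Real.sqrt_nonneg x
  set s := Real.sqrt x with hsdef
  rcases le_or_gt (|x-1|) 1 with h | h
  · rw [min_eq_right h]
    have habs : |x - 1| = |s - 1| * (s + 1) := by
      rw [← abs_of_nonneg (by linarith : (0:ℝ) ≤ s + 1), ← abs_mul]
      congr 1; nlinarith
    have ht : 0 ≤ |s - 1| := abs_nonneg _
    have ht2 : |s-1|^2 = (s-1)^2 := sq_abs _
    have hx2 : x ≤ 2 := by
      have := abs_le.mp h; linarith [this.2]
    have hs32 : s ≤ 3/2 := by nlinarith [sq_nonneg (s - 3/2)]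
    rw [habs]
    nlinarith [sq_nonneg (|s-1|), mul_nonneg ht ht]
  · rw [min_eq_left h.le]
    have hx2 : 2 < x := by
      by_contra h'
      push_neg at h'
      have : |x-1| ≤ 1 := abs_le.mpr ⟨by linarith, by linarith⟩
      linarith
    rw [abs_of_nonneg (by linarith : (0:ℝ) ≤ x - 1)]
    have hs75 : 7/5 ≤ s := by nlinarith
    nlinarith [mul_nonneg (by linarith : (0:ℝ) ≤ 7*s-9) (by linarith : (0:ℝ) ≤ s-1)]

lemma stmt19_aux3 (a x : ℝ) (ha : 0 < a) (hx : 0 < x) :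
    (1/8) * min 1 (|x - a|/a) * (|x - a|/a) * a ≤ a * Real.log (a/x) + x - a := by
  have ht : 0 < x / a := div_pos hx ha
  have habs : |x - a|/a = |x/a - 1| := by
    have h : (x - a)/a = x/a - 1 := by field_simp
    rw [← h, abs_div, abs_of_pos ha]
  have hlog : Real.log (a/x) = -Real.log (x/a) := by
    rw [← Real.log_inv, inv_div]
  rw [habs, hlog]
  have h3 : (1/8) * min 1 |x/a - 1| * |x/a - 1| ≤ x/a - 1 - Real.log (x/a) :=
    le_trans (stmt19_aux2 (x/a) ht) (stmt19_aux1 (x/a) ht)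
  have h4 := mul_le_mul_of_nonneg_right h3 ha.le
  have h5 : (x/a - 1 - Real.log (x/a)) * a = a * (-Real.log (x/a)) + x - a := by
    field_simp; ring
  linarith

/-- Zhang (2011), Lemma 9: for positive arrays with equal total mass,
`D_KL(b*, b) ≥ (1/8) min{1, η} η minᵢⱼ b*ᵢⱼ` where `η` is the maximum relative
deviation of `b` from `b*`. -/
theorem stmt19 (n m : ℕ) (bstar b : Fin (n + 1) → Fin (m + 1) → ℝ)
    (hbs : ∀ i j, 0 < bstar i j) (hb : ∀ i j, 0 < b i j)
    (hsum : ∑ i, ∑ j, bstar i j = ∑ i, ∑ j, b i j) :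
    (1 / 8) *
        min 1 (Finset.univ.sup' Finset.univ_nonempty
          (fun p : Fin (n + 1) × Fin (m + 1) =>
            |b p.1 p.2 - bstar p.1 p.2| / bstar p.1 p.2)) *
        (Finset.univ.sup' Finset.univ_nonempty
          (fun p : Fin (n + 1) × Fin (m + 1) =>
            |b p.1 p.2 - bstar p.1 p.2| / bstar p.1 p.2)) *
        (Finset.univ.inf' Finset.univ_nonempty
          (fun p : Fin (n + 1) × Fin (m + 1) => bstar p.1 p.2))
      ≤ ∑ i, ∑ j, bstar i j * Real.log (bstar i j / b i j) := by
  set F : Fin (n + 1) × Fin (m + 1) → ℝ :=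
    fun p => |b p.1 p.2 - bstar p.1 p.2| / bstar p.1 p.2 with hF
  set η := Finset.univ.sup' Finset.univ_nonempty F with hη
  set μ := Finset.univ.inf' Finset.univ_nonempty
    (fun p : Fin (n + 1) × Fin (m + 1) => bstar p.1 p.2) with hμdef
  obtain ⟨p₀, -, hp₀⟩ := Finset.exists_mem_eq_sup' Finset.univ_nonempty F
  set G : Fin (n + 1) × Fin (m + 1) → ℝ :=
    fun p => bstar p.1 p.2 * Real.log (bstar p.1 p.2 / b p.1 p.2) + b p.1 p.2 - bstar p.1 p.2
    with hG
  have key : ∀ p : Fin (n + 1) × Fin (m + 1),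
      (1/8) * min 1 (F p) * (F p) * bstar p.1 p.2 ≤ G p := fun p =>
    stmt19_aux3 (bstar p.1 p.2) (b p.1 p.2) (hbs _ _) (hb _ _)
  have hFpos : ∀ p : Fin (n + 1) × Fin (m + 1), 0 ≤ F p := fun p =>
    div_nonneg (abs_nonneg _) (hbs _ _).le
  have hlow : ∀ p : Fin (n + 1) × Fin (m + 1),
      0 ≤ (1/8) * min 1 (F p) * (F p) * bstar p.1 p.2 := fun p =>
    mul_nonneg (mul_nonneg (mul_nonneg (by norm_num)
      (le_min zero_le_one (hFpos p))) (hFpos p)) (hbs _ _).le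
  have hG0 : ∀ p : Fin (n + 1) × Fin (m + 1), 0 ≤ G p := fun p =>
    le_trans (hlow p) (key p)
  have hb_sum : ∑ p : Fin (n + 1) × Fin (m + 1), b p.1 p.2
      = ∑ p : Fin (n + 1) × Fin (m + 1), bstar p.1 p.2 := by
    rw [Fintype.sum_prod_type, Fintype.sum_prod_type]
    exact hsum.symm
  have hGsum : ∑ p : Fin (n + 1) × Fin (m + 1), G p
      = ∑ p : Fin (n + 1) × Fin (m + 1),
          bstar p.1 p.2 * Real.log (bstar p.1 p.2 / b p.1 p.2) := by
    have h1 : ∑ p : Fin (n + 1) × Fin (m + 1), G p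
        = (∑ p : Fin (n + 1) × Fin (m + 1),
            bstar p.1 p.2 * Real.log (bstar p.1 p.2 / b p.1 p.2))
          + ((∑ p : Fin (n + 1) × Fin (m + 1), b p.1 p.2)
            - ∑ p : Fin (n + 1) × Fin (m + 1), bstar p.1 p.2) := by
      rw [← Finset.sum_sub_distrib, ← Finset.sum_add_distrib]
      exact Finset.sum_congr rfl fun p _ => by ring
    rw [h1, hb_sum]; ring
  have hη0 : 0 ≤ η := by rw [hη, hp₀]; exact hFpos p₀
  have hcoef : 0 ≤ (1/8 : ℝ) * min 1 η * η :=
    mul_nonneg (mul_nonneg (by norm_num) (le_min zero_le_one hη0)) hη0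
  have hμle : μ ≤ bstar p₀.1 p₀.2 := Finset.inf'_le _ (Finset.mem_univ p₀)
  have hgoal : (1/8 : ℝ) * min 1 η * η * μ
      ≤ ∑ i, ∑ j, bstar i j * Real.log (bstar i j / b i j) := by
    calc (1/8 : ℝ) * min 1 η * η * μ
        ≤ (1/8) * min 1 η * η * bstar p₀.1 p₀.2 :=
          mul_le_mul_of_nonneg_left hμle hcoef
      _ = (1/8) * min 1 (F p₀) * (F p₀) * bstar p₀.1 p₀.2 := by rw [← hp₀]
      _ ≤ G p₀ := key p₀
      _ ≤ ∑ p : Fin (n + 1) × Fin (m + 1), G p :=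
          Finset.single_le_sum (fun p _ => hG0 p) (Finset.mem_univ p₀)
      _ = ∑ i, ∑ j, bstar i j * Real.log (bstar i j / b i j) := by
          rw [hGsum, Fintype.sum_prod_type]
  exact hgoal
end
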